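/- For every n ≥ 0 and every m ≥ 1, the coefficients of the monic matrix orthogonal polynomials and the moment coefficients b_{n,k} satisfy Σ_{j=0}^m a_{n,n-m+j}·b_{n,n+j-1}* = Σ_{j=0}^m b_{n,n+m-j-1}·a_{n,n-j}*. -/

import Mathlib

open MeasureTheory Matrix Complex Finset
open scoped ComplexOrder

/-- Entrywise integral of a matrix-valued function over an interval `(a, b)`. -/
noncomputable def mint {N : ℕ} (a b : ℝ) (F : ℝ → Matrix (Fin N) (Fin N) ℂ) :
    Matrix (Fin N) (Fin N) ℂ :=
  Matrix.of fun i j => ∫ x in a..b, F x i j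

set_option maxHeartbeats 1000000 in
theorem stmt9
    (N : ℕ) (hN : 1 ≤ N) (a b : ℝ) (hab : a < b)
    (W : ℝ → Matrix (Fin N) (Fin N) ℂ)
    (hWcont : ContinuousOn W (Set.Ioo a b))
    (hWpos : ∀ x ∈ Set.Ioo a b, (W x).PosDef)
    (hWmom : ∀ (n : ℕ) (i j : Fin N),
      IntegrableOn (fun x : ℝ => |x| ^ n * ‖W x i j‖) (Set.Ioo a b))
    (hWnt : ∀ (d : ℕ) (c : Fin (d + 1) → Matrix (Fin N) (Fin N) ℂ), (∃ k, c k ≠ 0) →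
      IsUnit (mint a b (fun x =>
        (∑ k : Fin (d + 1), ((x : ℂ) ^ (k : ℕ)) • c k) * W x * (∑ k : Fin (d + 1), ((x : ℂ) ^ (k : ℕ)) • c k)ᴴ)))
    (aC : ℕ → ℤ → Matrix (Fin N) (Fin N) ℂ)
    (haDiag : ∀ n : ℕ, aC n n = 1)
    (haHigh : ∀ (n : ℕ) (j : ℤ), (n : ℤ) < j → aC n j = 0)
    (haLow : ∀ (n : ℕ) (j : ℤ), j < 0 → aC n j = 0)
    (P : ℕ → ℂ → Matrix (Fin N) (Fin N) ℂ)
    (hP : ∀ (n : ℕ) (z : ℂ), P n z = ∑ j ∈ Finset.range (n + 1), z ^ j • aC n j)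
    (horth : ∀ n j : ℕ, j < n →
      mint a b (fun x => ((x : ℂ) ^ j) • (P n (x : ℂ) * W x)) = 0)
    (bC : ℕ → ℤ → Matrix (Fin N) (Fin N) ℂ)
    (hb : ∀ (n k : ℕ), bC n (k : ℤ) = mint a b (fun x => ((x : ℂ) ^ k) • (P n (x : ℂ) * W x)))
    (hbLow : ∀ (n : ℕ) (k : ℤ), k < 0 → bC n k = 0)
 :
    ∀ n : ℕ, ∀ m : ℕ, 1 ≤ m →
      ∑ j ∈ Finset.range (m + 1), aC n ((n : ℤ) - (m : ℤ) + (j : ℤ)) *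
          (bC n ((n : ℤ) + (j : ℤ) - 1))ᴴ =
        ∑ j ∈ Finset.range (m + 1), bC n ((n : ℤ) + (m : ℤ) - (j : ℤ) - 1) *
          (aC n ((n : ℤ) - (j : ℤ)))ᴴ := by
  intro n m hm
  -- vanishing of low moments
  have hbzero : ∀ j : ℤ, 0 ≤ j → j < (n : ℤ) → bC n j = 0 := by
    intro j h0 hn
    lift j to ℕ using h0
    rw [hb, horth n j (by exact_mod_cast hn)]
  -- basic integrability of powers times entries of W
  have hW1 : ∀ (M : ℕ) (p l : Fin N),
      IntegrableOn (fun x : ℝ => (x : ℂ) ^ M * W x p l) (Set.Ioo a b) volume := by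
    intro M p l
    have hcont : ContinuousOn (fun x : ℝ => (x : ℂ) ^ M * W x p l) (Set.Ioo a b) := by
      apply ContinuousOn.mul
      · exact (Complex.continuous_ofReal.pow M).continuousOn
      · exact ((continuous_apply l).comp (continuous_apply p)).comp_continuousOn hWcont
    refine Integrable.mono' (hWmom M p l) (hcont.aestronglyMeasurable measurableSet_Ioo) ?_
    filter_upwards with x
    simp [abs_pow]
  -- integrability of the entries of x^K • (P n x * W x)
  have hPWent : ∀ (K : ℕ) (i l : Fin N),
      (fun x : ℝ => (((x : ℂ) ^ K) • (P n (x : ℂ) * W x)) i l)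
        = fun x : ℝ => ∑ j ∈ Finset.range (n + 1), ∑ p, aC n j i p * ((x : ℂ) ^ (K + j) * W x p l) := by
    intro K i l
    funext x
    simp only [Matrix.smul_apply, Matrix.mul_apply, hP, Matrix.sum_apply, smul_eq_mul,
      Finset.sum_mul, Finset.mul_sum, pow_add]
    refine Finset.sum_congr rfl fun j _ => Finset.sum_congr rfl fun p _ => by ring
  have hentI : ∀ (K : ℕ) (i l : Fin N),
      IntegrableOn (fun x : ℝ => (((x : ℂ) ^ K) • (P n (x : ℂ) * W x)) i l) (Set.Ioo a b) volume := by
    intro K i l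
    rw [hPWent K i l]
    exact integrable_finset_sum _ fun j _ => integrable_finset_sum _ fun p _ =>
      (hW1 (K + j) p l).const_mul _
  have hent : ∀ (K : ℕ) (i l : Fin N),
      IntervalIntegrable (fun x : ℝ => (((x : ℂ) ^ K) • (P n (x : ℂ) * W x)) i l) volume a b := by
    intro K i l
    rw [intervalIntegrable_iff_integrableOn_Ioo_of_le hab.le]
    exact hentI K i l
  have hent2 : ∀ (K : ℕ) (j : ℕ) (i l : Fin N),
      IntervalIntegrable (fun x : ℝ =>
        ∑ p, (((x : ℂ) ^ K) • (P n (x : ℂ) * W x)) i p * (aC n (j : ℤ))ᴴ p l) volume a b := by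
    intro K j i l
    rw [intervalIntegrable_iff_integrableOn_Ioo_of_le hab.le]
    exact integrable_finset_sum _ fun p _ => (hentI K i p).mul_const _
  -- the conjugate transpose of P n x
  have hPH : ∀ x : ℝ, (P n (x : ℂ))ᴴ
      = ∑ j ∈ Finset.range (n + 1), ((x : ℂ) ^ j) • (aC n (j : ℤ))ᴴ := by
    intro x
    rw [hP, Matrix.conjTranspose_sum]
    refine Finset.sum_congr rfl fun j _ => ?_
    rw [Matrix.conjTranspose_smul]
    congr 1
    simp [← Complex.ofReal_pow]
  -- pointwise expansion of the Hermitian integrand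
  have hptw : ∀ x : ℝ, ((x : ℂ) ^ (m - 1)) • (P n (x : ℂ) * W x * (P n (x : ℂ))ᴴ)
      = ∑ j ∈ Finset.range (n + 1),
          (((x : ℂ) ^ (m - 1 + j)) • (P n (x : ℂ) * W x)) * (aC n (j : ℤ))ᴴ := by
    intro x
    rw [hPH, Finset.mul_sum, Finset.smul_sum]
    refine Finset.sum_congr rfl fun j _ => ?_
    rw [Matrix.mul_smul, smul_smul, ← pow_add, Matrix.smul_mul]
  -- S = T (integral linearity)
  set S : Matrix (Fin N) (Fin N) ℂ :=
    mint a b (fun x => ((x : ℂ) ^ (m - 1)) • (P n (x : ℂ) * W x * (P n (x : ℂ))ᴴ)) with hSdef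
  have hS_T : S = ∑ j ∈ Finset.range (n + 1),
      (mint a b fun x => ((x : ℂ) ^ (m - 1 + j)) • (P n (x : ℂ) * W x)) * (aC n (j : ℤ))ᴴ := by
    ext i l
    show (∫ x in a..b, (((x : ℂ) ^ (m - 1)) • (P n (x : ℂ) * W x * (P n (x : ℂ))ᴴ)) i l) = _
    have e1 : ∀ x : ℝ, (((x : ℂ) ^ (m - 1)) • (P n (x : ℂ) * W x * (P n (x : ℂ))ᴴ)) i l
        = ∑ j ∈ Finset.range (n + 1), ∑ p,
            (((x : ℂ) ^ (m - 1 + j)) • (P n (x : ℂ) * W x)) i p * (aC n (j : ℤ))ᴴ p l := by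
      intro x
      rw [hptw]
      simp only [Matrix.sum_apply, Matrix.mul_apply, Matrix.smul_apply, smul_eq_mul]
    simp_rw [e1]
    rw [intervalIntegral.integral_finset_sum (fun j _ => hent2 (m - 1 + j) j i l)]
    simp only [Matrix.sum_apply, Matrix.mul_apply, mint, Matrix.of_apply]
    refine Finset.sum_congr rfl fun j _ => ?_
    rw [intervalIntegral.integral_finset_sum (fun p _ => (hent (m - 1 + j) i p).mul_const _)]
    exact Finset.sum_congr rfl fun p _ => intervalIntegral.integral_mul_const _ _
  have hT : S = ∑ j ∈ Finset.range (n + 1),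
      bC n ((j : ℤ) + (m : ℤ) - 1) * (aC n (j : ℤ))ᴴ := by
    rw [hS_T]
    refine Finset.sum_congr rfl fun j _ => ?_
    have : ((j : ℤ) + (m : ℤ) - 1) = ((m - 1 + j : ℕ) : ℤ) := by push_cast [Nat.cast_sub hm]; ring
    rw [this, hb]
  -- Hermitian symmetry of S
  have hSH : Sᴴ = S := by
    ext i l
    rw [Matrix.conjTranspose_apply]
    have key : ∀ (i l : Fin N), S i l
        = ∫ x in Set.Ioo a b,
            (((x : ℂ) ^ (m - 1)) • (P n (x : ℂ) * W x * (P n (x : ℂ))ᴴ)) i l := by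
      intro i l
      have h0 : S i l = ∫ x in a..b,
          (((x : ℂ) ^ (m - 1)) • (P n (x : ℂ) * W x * (P n (x : ℂ))ᴴ)) i l := rfl
      rw [h0, intervalIntegral.integral_of_le hab.le, integral_Ioc_eq_integral_Ioo]
    rw [key, key]
    rw [Complex.star_def, ← integral_conj]
    refine setIntegral_congr_fun measurableSet_Ioo fun x hx => ?_
    have hFH : (((x : ℂ) ^ (m - 1)) • (P n (x : ℂ) * W x * (P n (x : ℂ))ᴴ))ᴴ
        = ((x : ℂ) ^ (m - 1)) • (P n (x : ℂ) * W x * (P n (x : ℂ))ᴴ) := by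
      rw [Matrix.conjTranspose_smul, Matrix.conjTranspose_mul, Matrix.conjTranspose_mul,
        Matrix.conjTranspose_conjTranspose, (hWpos x hx).1.eq]
      congr 1
      · simp [← Complex.ofReal_pow]
      · rw [Matrix.mul_assoc]
    calc (starRingEnd ℂ) ((((x : ℂ) ^ (m - 1)) • (P n (x : ℂ) * W x * (P n (x : ℂ))ᴴ)) l i)
        = (((x : ℂ) ^ (m - 1)) • (P n (x : ℂ) * W x * (P n (x : ℂ))ᴴ))ᴴ i l := rfl
      _ = _ := by rw [hFH]
  -- T' = Sᴴ
  have hT' : Sᴴ = ∑ j ∈ Finset.range (n + 1),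
      aC n (j : ℤ) * (bC n ((j : ℤ) + (m : ℤ) - 1))ᴴ := by
    rw [hT, Matrix.conjTranspose_sum]
    exact Finset.sum_congr rfl fun j _ => by
      rw [Matrix.conjTranspose_mul, Matrix.conjTranspose_conjTranspose]
  -- the ℤ-indexed summand
  set g : ℤ → Matrix (Fin N) (Fin N) ℂ :=
    fun j => aC n j * (bC n (j + (m : ℤ) - 1))ᴴ with hg
  have hgLow : ∀ j : ℤ, j < 0 → g j = 0 := fun j hj => by
    simp [hg, haLow n j hj]
  have hgMid : ∀ j : ℤ, 0 ≤ j + (m : ℤ) - 1 → j + (m : ℤ) - 1 < (n : ℤ) → g j = 0 := by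
    intro j h1 h2
    simp [hg, hbzero _ h1 h2]
  -- U = sum over Icc (n - m) n of g
  have hU : (∑ j ∈ Finset.range (m + 1), aC n ((n : ℤ) - (m : ℤ) + (j : ℤ)) *
      (bC n ((n : ℤ) + (j : ℤ) - 1))ᴴ) = ∑ j ∈ Finset.Icc ((n : ℤ) - (m : ℤ)) (n : ℤ), g j := by
    refine Finset.sum_nbij' (fun i => (n : ℤ) - (m : ℤ) + (i : ℤ))
      (fun j => (j - ((n : ℤ) - (m : ℤ))).toNat) ?_ ?_ ?_ ?_ ?_
    · intro i hi
      simp only [Finset.mem_range] at hi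
      simp only [Finset.mem_Icc]; omega
    · intro j hj
      simp only [Finset.mem_Icc] at hj
      simp only [Finset.mem_range]; omega
    · intro i hi; simp only [Finset.mem_range] at hi; beta_reduce; omega
    · intro j hj; simp only [Finset.mem_Icc] at hj; beta_reduce; omega
    · intro i hi
      simp only [hg]
      rw [show (n : ℤ) - (m : ℤ) + (i : ℤ) + (m : ℤ) - 1 = (n : ℤ) + (i : ℤ) - 1 by omega]
  -- T' = sum over Icc 0 n of g
  have hT'Icc : (∑ j ∈ Finset.range (n + 1), aC n (j : ℤ) * (bC n ((j : ℤ) + (m : ℤ) - 1))ᴴ)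
      = ∑ j ∈ Finset.Icc (0 : ℤ) (n : ℤ), g j := by
    refine Finset.sum_nbij' (fun i => (i : ℤ)) (fun j => j.toNat) ?_ ?_ ?_ ?_ ?_
    · intro i hi; simp only [Finset.mem_range] at hi; simp only [Finset.mem_Icc]; omega
    · intro j hj; simp only [Finset.mem_Icc] at hj; simp only [Finset.mem_range]; omega
    · intro i _; beta_reduce; omega
    · intro j hj; simp only [Finset.mem_Icc] at hj; beta_reduce; omega
    · intro i _; rfl
  -- both Icc sums agree with the big one
  have hbig1 : ∑ j ∈ Finset.Icc ((n : ℤ) - (m : ℤ)) (n : ℤ), g j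
      = ∑ j ∈ Finset.Icc (min ((n : ℤ) - (m : ℤ)) 0) (n : ℤ), g j := by
    refine Finset.sum_subset (Finset.Icc_subset_Icc (min_le_left _ _) le_rfl) ?_
    intro j hj hj2
    simp only [Finset.mem_Icc] at hj hj2
    have hjlt : j < (n : ℤ) - (m : ℤ) := by omega
    rcases lt_or_ge j 0 with h | h
    · exact hgLow j h
    · exact hgMid j (by omega) (by omega)
  have hbig2 : ∑ j ∈ Finset.Icc (0 : ℤ) (n : ℤ), g j
      = ∑ j ∈ Finset.Icc (min ((n : ℤ) - (m : ℤ)) 0) (n : ℤ), g j := by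
    refine Finset.sum_subset (Finset.Icc_subset_Icc (min_le_right _ _) le_rfl) ?_
    intro j hj hj2
    simp only [Finset.mem_Icc] at hj hj2
    exact hgLow j (by omega)
  -- U = Sᴴ
  have hUS : (∑ j ∈ Finset.range (m + 1), aC n ((n : ℤ) - (m : ℤ) + (j : ℤ)) *
      (bC n ((n : ℤ) + (j : ℤ) - 1))ᴴ) = Sᴴ := by
    rw [hU, hbig1, ← hbig2, ← hT'Icc, ← hT']
  -- U is Hermitian
  have hUsymm : (∑ j ∈ Finset.range (m + 1), aC n ((n : ℤ) - (m : ℤ) + (j : ℤ)) *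
      (bC n ((n : ℤ) + (j : ℤ) - 1))ᴴ)ᴴ
      = ∑ j ∈ Finset.range (m + 1), aC n ((n : ℤ) - (m : ℤ) + (j : ℤ)) *
        (bC n ((n : ℤ) + (j : ℤ) - 1))ᴴ := by
    rw [hUS, Matrix.conjTranspose_conjTranspose, hSH]
  -- the right-hand side is Uᴴ
  have hRHS : (∑ j ∈ Finset.range (m + 1), bC n ((n : ℤ) + (m : ℤ) - (j : ℤ) - 1) *
      (aC n ((n : ℤ) - (j : ℤ)))ᴴ)
      = (∑ j ∈ Finset.range (m + 1), aC n ((n : ℤ) - (m : ℤ) + (j : ℤ)) *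
        (bC n ((n : ℤ) + (j : ℤ) - 1))ᴴ)ᴴ := by
    rw [Matrix.conjTranspose_sum]
    simp_rw [Matrix.conjTranspose_mul, Matrix.conjTranspose_conjTranspose]
    rw [← Finset.sum_range_reflect]
    refine Finset.sum_congr rfl fun j hj => ?_
    simp only [Finset.mem_range] at hj
    have e1 : (n : ℤ) + (m : ℤ) - ((m + 1 - 1 - j : ℕ) : ℤ) - 1 = (n : ℤ) + (j : ℤ) - 1 := by
      omega
    have e2 : (n : ℤ) - ((m + 1 - 1 - j : ℕ) : ℤ) = (n : ℤ) - (m : ℤ) + (j : ℤ) := by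
      omega
    rw [e1, e2]
  rw [hRHS, hUsymm]
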